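/- arXiv:2511.11588 — 2 statements merged into one kernel-verified Lean document; each statement's English description precedes it below -/
import Mathlib

section
/- Let H, K, G be complex Hilbert spaces, A : H → K and C : G → K bounded operators, and λ > 0 such that CC* ≤ λ AA* (i.e., ⟨CC*z, z⟩ ≤ λ ⟨AA*z, z⟩ for all z ∈ K). Then for every ε > 0 the operator X_ε := A*(AA* + εI)⁻¹ C : G → H satisfies ‖X_ε‖ ≤ √λ. -/
set_option maxHeartbeats 1000000

theorem regularized_douglas_norm_bound
    {H K G : Type*} [NormedAddCommGroup H] [InnerProductSpace ℂ H] [CompleteSpace H]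
    [NormedAddCommGroup K] [InnerProductSpace ℂ K] [CompleteSpace K]
    [NormedAddCommGroup G] [InnerProductSpace ℂ G] [CompleteSpace G]
    (A : H →L[ℂ] K) (C : G →L[ℂ] K) (lam : ℝ) (hlam : 0 < lam)
    (hmaj : ∀ z : K,
      (inner ℂ ((C ∘L C.adjoint) z) z : ℂ).re ≤ lam * (inner ℂ ((A ∘L A.adjoint) z) z : ℂ).re) :
    ∀ ε : ℝ, 0 < ε →
      ‖A.adjoint ∘L Ring.inverse (A ∘L A.adjoint + (ε : ℂ) • (1 : K →L[ℂ] K)) ∘L C‖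
        ≤ Real.sqrt lam := by
  intro ε hε
  set T := A ∘L A.adjoint + (ε : ℂ) • (1 : K →L[ℂ] K) with hTdef
  -- real part of ⟪AA* x, x⟫ is ‖A† x‖²
  have hApos : ∀ x : K, (inner ℂ ((A ∘L A.adjoint) x) x : ℂ).re = ‖A.adjoint x‖ ^ 2 := by
    intro x
    have : (inner ℂ ((A ∘L A.adjoint) x) x : ℂ) = inner ℂ (A.adjoint x) (A.adjoint x) := by
      simp [ContinuousLinearMap.comp_apply, ← ContinuousLinearMap.adjoint_inner_right]
    rw [this, inner_self_eq_norm_sq_to_K]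
    simp [← Complex.ofReal_pow]
  have hCpos : ∀ x : K, (inner ℂ ((C ∘L C.adjoint) x) x : ℂ).re = ‖C.adjoint x‖ ^ 2 := by
    intro x
    have : (inner ℂ ((C ∘L C.adjoint) x) x : ℂ) = inner ℂ (C.adjoint x) (C.adjoint x) := by
      simp [ContinuousLinearMap.comp_apply, ← ContinuousLinearMap.adjoint_inner_right]
    rw [this, inner_self_eq_norm_sq_to_K]
    simp [← Complex.ofReal_pow]
  have hTre : ∀ x : K, (inner ℂ (T x) x : ℂ).re = ‖A.adjoint x‖ ^ 2 + ε * ‖x‖ ^ 2 := by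
    intro x
    have hx : T x = (A ∘L A.adjoint) x + (ε : ℂ) • x := by
      simp [hTdef, ContinuousLinearMap.add_apply]
    rw [hx, inner_add_left, Complex.add_re, hApos, inner_smul_left]
    have : ((starRingEnd ℂ) (ε : ℂ) * inner ℂ x x).re = ε * ‖x‖ ^ 2 := by
      rw [Complex.conj_ofReal, inner_self_eq_norm_sq_to_K]
      simp [← Complex.ofReal_pow, ← Complex.ofReal_mul]
    rw [this]
  have hu : IsUnit T := by
    apply ContinuousLinearMap.isUnit_of_forall_le_norm_inner_map T
      (c := ε.toNNReal) (Real.toNNReal_pos.mpr hε)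
    intro x
    have h1 : (inner ℂ (T x) x : ℂ).re ≤ ‖(inner ℂ (T x) x : ℂ)‖ := Complex.re_le_norm _
    have h2 : ε * ‖x‖ ^ 2 ≤ (inner ℂ (T x) x : ℂ).re := by
      rw [hTre]; nlinarith [sq_nonneg ‖A.adjoint x‖]
    rw [Real.coe_toNNReal _ hε.le]
    nlinarith
  have hTB : ∀ y : K, T (Ring.inverse T y) = y := by
    intro y
    have h := Ring.mul_inverse_cancel T hu
    rw [← ContinuousLinearMap.mul_apply, h, ContinuousLinearMap.one_apply]
  apply ContinuousLinearMap.opNorm_le_bound _ (Real.sqrt_nonneg lam)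
  intro g
  set u := Ring.inverse T (C g) with hu_def
  have hTu : T u = C g := hTB _
  set s := (inner ℂ (T u) u : ℂ).re with hs_def
  have hs0 : 0 ≤ s := by rw [hs_def, hTre]; positivity
  have hA : ‖A.adjoint u‖ ^ 2 ≤ s := by
    rw [hs_def, hTre]; nlinarith [sq_nonneg ‖u‖]
  have hC : ‖C.adjoint u‖ ^ 2 ≤ lam * s := by
    have h1 := hmaj u
    rw [hCpos, hApos] at h1
    have h2 : ‖A.adjoint u‖ ^ 2 ≤ s := hA
    nlinarith
  have hsg : s ≤ ‖g‖ * ‖C.adjoint u‖ := by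
    have h1 : (inner ℂ (T u) u : ℂ) = inner ℂ g (C.adjoint u) := by
      rw [hTu, ContinuousLinearMap.adjoint_inner_right]
    have h2 : s ≤ ‖(inner ℂ g (C.adjoint u) : ℂ)‖ := by
      rw [hs_def, h1]; exact Complex.re_le_norm _
    exact h2.trans (norm_inner_le_norm _ _)
  have hs : s ≤ lam * ‖g‖ ^ 2 := by
    rcases eq_or_lt_of_le hs0 with h0 | h0
    · rw [← h0]; positivity
    · have h1 : s ^ 2 ≤ ‖g‖ ^ 2 * (lam * s) := by
        nlinarith [norm_nonneg g, norm_nonneg (C.adjoint u)]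
      nlinarith
  have hfin : ‖A.adjoint u‖ ^ 2 ≤ lam * ‖g‖ ^ 2 := hA.trans hs
  have h3 : ‖A.adjoint u‖ ≤ Real.sqrt lam * ‖g‖ := by
    have := Real.sqrt_le_sqrt hfin
    rwa [Real.sqrt_sq (norm_nonneg _), Real.sqrt_mul hlam.le,
      Real.sqrt_sq (norm_nonneg g)] at this
  calc ‖(A.adjoint ∘L Ring.inverse T ∘L C) g‖ = ‖A.adjoint u‖ := by
        simp [ContinuousLinearMap.comp_apply, hu_def]
    _ ≤ Real.sqrt lam * ‖g‖ := h3
end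

section
/- Let H₁, H₂ be complex Hilbert spaces, A self-adjoint on H₁ with ⟨Ax,x⟩ ≥ a‖x‖² for all x (a > 0), C self-adjoint on H₂ with ⟨Cy,y⟩ ≥ c‖y‖² (c > 0), and B : H₂ → H₁ bounded satisfying |⟨By, x⟩|² ≤ γ ⟨Ax,x⟩ ⟨Cy,y⟩ for all x, y, where 0 ≤ γ < 1. Then the block operator H = [[A, B],[B*, C]] on H₁ ⊕ H₂ satisfies ⟨H(x,y), (x,y)⟩ ≥ (1 − √γ) · min(a, c) · ‖(x,y)‖² for all (x, y). -/
theorem block_coercivity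
    {H₁ H₂ : Type*} [NormedAddCommGroup H₁] [InnerProductSpace ℂ H₁] [CompleteSpace H₁]
    [NormedAddCommGroup H₂] [InnerProductSpace ℂ H₂] [CompleteSpace H₂]
    (A : H₁ →L[ℂ] H₁) (C : H₂ →L[ℂ] H₂) (B : H₂ →L[ℂ] H₁)
    (a c γ : ℝ) (ha : 0 < a) (hc : 0 < c) (hγ0 : 0 ≤ γ) (hγ1 : γ < 1)
    (hA : IsSelfAdjoint A) (hC : IsSelfAdjoint C)
    (hAa : ∀ x : H₁, a * ‖x‖ ^ 2 ≤ (inner ℂ (A x) x : ℂ).re)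
    (hCc : ∀ y : H₂, c * ‖y‖ ^ 2 ≤ (inner ℂ (C y) y : ℂ).re)
    (hcross : ∀ (x : H₁) (y : H₂),
      ‖(inner ℂ (B y) x : ℂ)‖ ^ 2 ≤ γ * ((inner ℂ (A x) x : ℂ).re * (inner ℂ (C y) y : ℂ).re)) :
    ∀ (x : H₁) (y : H₂),
      (1 - Real.sqrt γ) * min a c * (‖x‖ ^ 2 + ‖y‖ ^ 2)
        ≤ (inner ℂ (A x) x : ℂ).re + 2 * (inner ℂ (B y) x : ℂ).re + (inner ℂ (C y) y : ℂ).re := by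
  intro x y
  set p := (inner ℂ (A x) x : ℂ).re with hp
  set q := (inner ℂ (C y) y : ℂ).re with hq
  have hp0 : 0 ≤ p := le_trans (by positivity) (hAa x)
  have hq0 : 0 ≤ q := le_trans (by positivity) (hCc y)
  set s := Real.sqrt γ with hs
  have hs0 : 0 ≤ s := Real.sqrt_nonneg _
  have hs1 : s ≤ 1 := by
    rw [hs, show (1:ℝ) = Real.sqrt 1 by simp]
    exact Real.sqrt_le_sqrt hγ1.le
  -- bound on the cross term norm
  have hBn : ‖(inner ℂ (B y) x : ℂ)‖ ≤ s * (Real.sqrt p * Real.sqrt q) := by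
    have h1 : ‖(inner ℂ (B y) x : ℂ)‖ ^ 2 ≤ (s * (Real.sqrt p * Real.sqrt q)) ^ 2 := by
      have : (s * (Real.sqrt p * Real.sqrt q)) ^ 2 = γ * (p * q) := by
        rw [mul_pow, mul_pow, Real.sq_sqrt hγ0, Real.sq_sqrt hp0, Real.sq_sqrt hq0]
      rw [this]; exact hcross x y
    have h2 := Real.sqrt_le_sqrt h1
    rwa [Real.sqrt_sq (norm_nonneg _), Real.sqrt_sq (by positivity)] at h2
  have hre : -(s * (Real.sqrt p * Real.sqrt q)) ≤ (inner ℂ (B y) x : ℂ).re := by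
    have h3 : |(inner ℂ (B y) x : ℂ).re| ≤ ‖(inner ℂ (B y) x : ℂ)‖ := by
      exact Complex.abs_re_le_norm _
    have h4 := neg_abs_le (inner ℂ (B y) x : ℂ).re
    linarith
  have hamgm : 2 * (Real.sqrt p * Real.sqrt q) ≤ p + q := by
    nlinarith [sq_nonneg (Real.sqrt p - Real.sqrt q), Real.sq_sqrt hp0, Real.sq_sqrt hq0]
  have key : (1 - s) * (p + q) ≤ p + 2 * (inner ℂ (B y) x : ℂ).re + q := by
    nlinarith [mul_nonneg hs0 (mul_nonneg (Real.sqrt_nonneg p) (Real.sqrt_nonneg q))]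
  have hmin : min a c * (‖x‖ ^ 2 + ‖y‖ ^ 2) ≤ p + q := by
    have h1 := hAa x; have h2 := hCc y
    have := min_le_left a c; have := min_le_right a c
    nlinarith [sq_nonneg ‖x‖, sq_nonneg ‖y‖]
  have h1s : 0 ≤ 1 - s := by linarith
  calc (1 - s) * min a c * (‖x‖ ^ 2 + ‖y‖ ^ 2)
      = (1 - s) * (min a c * (‖x‖ ^ 2 + ‖y‖ ^ 2)) := by ring
    _ ≤ (1 - s) * (p + q) := by exact mul_le_mul_of_nonneg_left hmin h1s
    _ ≤ _ := by linarith [key]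
end
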